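/- arXiv:1002.1414 — 3 statements merged into one kernel-verified Lean document; each statement's English description precedes it below -/
import Mathlib

section
/- Consequently, if (A;B;C;D) ∈ BS(n+1,n) and (C̃;D̃) is obtained from (C;D) by swapping every quad of type 4 = [[+,−],[−,+]] with type 5 = [[−,+],[+,−]] and vice versa, then (A;B;C̃;D̃) ∈ BS(n+1,n). -/
open Finset

/-- Nonperiodic autocorrelation function of a sequence supported on `[1,n]`. -/
noncomputable def ac (n : ℕ) (a : ℤ → ℤ) (i : ℤ) : ℤ :=
  ∑ j ∈ Finset.Icc (1 : ℤ) (n : ℤ), a j * a (i + j)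

/-- `a` is a `±1`-sequence of length `m`, extended by zero. -/
def binOn (m : ℕ) (a : ℤ → ℤ) : Prop :=
  (∀ j : ℤ, 1 ≤ j → j ≤ (m : ℤ) → a j = 1 ∨ a j = -1) ∧
  (∀ j : ℤ, j < 1 ∨ (m : ℤ) < j → a j = 0)

/-- Base sequences `BS(n+1,n)`. -/
def isBS (n : ℕ) (a b c d : ℤ → ℤ) : Prop :=
  binOn (n + 1) a ∧ binOn (n + 1) b ∧ binOn n c ∧ binOn n d ∧
  ∀ i : ℤ, i ≠ 0 →
    ac (n + 1) a i + ac (n + 1) b i + ac n c i + ac n d i = 0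

open Classical in
/-- Swap quads of type 4 = [[+,−],[−,+]] and 5 = [[−,+],[+,−]] of the pair `(c;d)`:
negate the entries of `x` at the positions of every such quad. -/
noncomputable def tswap (n : ℕ) (c d x : ℤ → ℤ) : ℤ → ℤ := fun j =>
  if 1 ≤ j ∧ j ≤ (n : ℤ) ∧ d j = -c j ∧ d ((n : ℤ) + 1 - j) = -c ((n : ℤ) + 1 - j) ∧
      c ((n : ℤ) + 1 - j) = -c j
  then -x j else x j


lemma sumSplit (a b c : ℤ) (hab : a ≤ b) (hbc : b ≤ c) (f : ℤ → ℤ) :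
    ∑ j ∈ Ioc a c, f j = (∑ j ∈ Ioc a b, f j) + ∑ j ∈ Ioc b c, f j := by
  rw [← Finset.Ioc_union_Ioc_eq_Ioc hab hbc, Finset.sum_union]
  rw [Finset.disjoint_left]
  intro x hx hx'; simp only [mem_Ioc] at *; omega

lemma prodSplit (a b c : ℤ) (hab : a ≤ b) (hbc : b ≤ c) (f : ℤ → ℤ) :
    ∏ j ∈ Ioc a c, f j = (∏ j ∈ Ioc a b, f j) * ∏ j ∈ Ioc b c, f j := by
  rw [← Finset.Ioc_union_Ioc_eq_Ioc hab hbc, Finset.prod_union]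
  rw [Finset.disjoint_left]
  intro x hx hx'; simp only [mem_Ioc] at *; omega

lemma IocSingleton (k : ℤ) : Ioc (k-1) k = {k} := by
  ext x; simp only [mem_Ioc, mem_singleton]; omega

lemma sgnMul {x y : ℤ} (hx : x = 1 ∨ x = -1) (hy : y = 1 ∨ y = -1) : x*y = 1 ∨ x*y = -1 := by
  rcases hx with h|h <;> rcases hy with h'|h' <;> subst h <;> subst h' <;> norm_num

lemma prodSign (s : Finset ℤ) (f : ℤ → ℤ) (hf : ∀ i ∈ s, f i = 1 ∨ f i = -1) :
    (∏ i ∈ s, f i) = 1 ∨ (∏ i ∈ s, f i) = -1 := by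
  classical
  induction s using Finset.induction with
  | empty => left; simp
  | @insert a s' hx ih =>
    rw [Finset.prod_insert hx]
    exact sgnMul (hf a (by simp)) (ih (fun i hi => hf i (by simp [hi])))

lemma pt2 {s t : ℤ} (hs : s = 1 ∨ s = -1) (ht : t = 1 ∨ t = -1) :
    ((s + t : ℤ) : ZMod 4) = 1 + ((s * t : ℤ) : ZMod 4) := by
  rcases hs with h|h <;> rcases ht with h'|h' <;> subst h <;> subst h' <;> decide

lemma sum3prod (s : Finset ℤ) (f : ℤ → ℤ) (hf : ∀ i ∈ s, f i = 1 ∨ f i = -1) :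
    ((∑ i ∈ s, (3 + f i) : ℤ) : ZMod 4) = ((∏ i ∈ s, f i : ℤ) : ZMod 4) - 1 := by
  classical
  induction s using Finset.induction with
  | empty => simp
  | @insert a s' hx ih =>
    have ha := hf a (by simp)
    have hP := prodSign s' f (fun i hi => hf i (by simp [hi]))
    have ihh := ih (fun i hi => hf i (by simp [hi]))
    rcases hP with h|h <;> rcases ha with h'|h' <;>
      rw [Finset.sum_insert hx, Finset.prod_insert hx, Int.cast_add, ihh, h', h] <;>
      first | decide | norm_num | (push_cast; decide)

/-- master lemma: extract product = -1 from the mod-4 equation -/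
lemma master (e : ℤ) (s t : Finset ℤ) (f g : ℤ → ℤ)
    (he : e = 1 ∨ e = -1)
    (hf : ∀ i ∈ s, f i = 1 ∨ f i = -1) (hg : ∀ i ∈ t, g i = 1 ∨ g i = -1)
    (H : (1 : ZMod 4) + ((e : ℤ) : ZMod 4) + ((∑ i ∈ s, (3 + f i) : ℤ) : ZMod 4)
        + ((∑ i ∈ t, (3 + g i) : ℤ) : ZMod 4) = 0) :
    e * ((∏ i ∈ s, f i) * (∏ i ∈ t, g i)) = -1 := by
  rw [sum3prod s f hf, sum3prod t g hg] at H
  have hF := prodSign s f hf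
  have hG := prodSign t g hg
  rcases he with h|h <;> rcases hF with h1|h1 <;> rcases hG with h2|h2 <;>
    rw [h, h1, h2] at H ⊢ <;> push_cast at H <;> first
      | (exact absurd H (by decide))
      | norm_num

lemma sumReflect' (lo hi lo' hi' S : ℤ) (h1 : lo' = S - hi - 1) (h2 : hi' = S - lo - 1)
    (f : ℤ → ℤ) : ∑ j ∈ Ioc lo hi, f (S - j) = ∑ j ∈ Ioc lo' hi', f j := by
  subst h1 h2
  refine Finset.sum_nbij' (fun j => S - j) (fun j => S - j) ?_ ?_ ?_ ?_ ?_ <;>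
    intro a ha <;> simp only [mem_Ioc] at * <;> omega

lemma prodReflect' (lo hi lo' hi' S : ℤ) (h1 : lo' = S - hi - 1) (h2 : hi' = S - lo - 1)
    (f : ℤ → ℤ) : ∏ j ∈ Ioc lo hi, f (S - j) = ∏ j ∈ Ioc lo' hi', f j := by
  subst h1 h2
  refine Finset.prod_nbij' (fun j => S - j) (fun j => S - j) ?_ ?_ ?_ ?_ ?_ <;>
    intro a ha <;> simp only [mem_Ioc] at * <;> omega

lemma IccIoc (L : ℤ) : Finset.Icc (1:ℤ) L = Finset.Ioc 0 L := by
  ext x; simp only [mem_Icc, mem_Ioc]; omega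

lemma acTrim (L : ℕ) (x : ℤ → ℤ) (hx0 : ∀ j, j < 1 ∨ (L:ℤ) < j → x j = 0)
    (i R : ℤ) (hi : 0 ≤ i) (hR : R = (L:ℤ) - i) :
    ac L x i = ∑ j ∈ Ioc 0 R, x j * x (i+j) := by
  rw [ac, IccIoc]
  symm
  apply Finset.sum_subset
  · intro j hj; simp only [mem_Ioc] at *; omega
  · intro j hjL hjR
    simp only [mem_Ioc] at hjL hjR
    have : x (i + j) = 0 := hx0 _ (by omega)
    rw [this, mul_zero]

lemma acPairs (L : ℕ) (x : ℤ → ℤ) (hx0 : ∀ j, j < 1 ∨ (L:ℤ) < j → x j = 0)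
    (i k : ℤ) (hk : 0 ≤ k) (hik : i = (L:ℤ) - 2*k) (hi : 0 ≤ i) :
    ac L x i = ∑ j ∈ Ioc 0 k, (x j * x (i+j) + x (2*k+1-j) * x (i+(2*k+1-j))) := by
  rw [acTrim L x hx0 i (2*k) hi (by omega)]
  rw [sumSplit 0 k (2*k) hk (by omega)]
  rw [← sumReflect' 0 k k (2*k) (2*k+1) (by ring) (by ring) (fun t => x t * x (i+t))]
  rw [← Finset.sum_add_distrib]

lemma acPairsOdd (L : ℕ) (x : ℤ → ℤ) (hx0 : ∀ j, j < 1 ∨ (L:ℤ) < j → x j = 0)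
    (i k : ℤ) (hk : 1 ≤ k) (hik : i = (L:ℤ) - (2*k-1)) (hi : 0 ≤ i) :
    ac L x i = x k * x (i+k) +
      ∑ j ∈ Ioc 0 (k-1), (x j * x (i+j) + x (2*k-j) * x (i+(2*k-j))) := by
  rw [acTrim L x hx0 i (2*k-1) hi (by omega)]
  rw [sumSplit 0 (k-1) (2*k-1) (by omega) (by omega)]
  rw [sumSplit (k-1) k (2*k-1) (by omega) (by omega)]
  rw [IocSingleton k, Finset.sum_singleton]
  rw [← sumReflect' 0 (k-1) k (2*k-1) (2*k) (by ring) (by ring) (fun t => x t * x (i+t))]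
  rw [Finset.sum_add_distrib]
  ring

lemma prodPairMid (F : ℤ → ℤ) (k : ℤ) (hk : 1 ≤ k) :
    F k * ∏ j ∈ Ioc 0 (k-1), (F j * F (2*k-j)) = ∏ j ∈ Ioc 0 (2*k-1), F j := by
  rw [Finset.prod_mul_distrib]
  rw [prodReflect' 0 (k-1) k (2*k-1) (2*k) (by ring) (by ring) F]
  rw [prodSplit 0 (k-1) (2*k-1) (by omega) (by omega)]
  rw [prodSplit (k-1) k (2*k-1) (by omega) (by omega)]
  rw [IocSingleton k, Finset.prod_singleton]
  ring

lemma prodPair (F : ℤ → ℤ) (k : ℤ) (hk : 0 ≤ k) :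
    ∏ j ∈ Ioc 0 k, (F j * F (2*k+1-j)) = ∏ j ∈ Ioc 0 (2*k), F j := by
  rw [Finset.prod_mul_distrib]
  rw [prodReflect' 0 k k (2*k) (2*k+1) (by ring) (by ring) F]
  rw [prodSplit 0 k (2*k) hk (by omega)]

def alphaF (n : ℕ) (a b : ℤ → ℤ) : ℤ → ℤ :=
  fun j => a j * a ((n:ℤ)+2-j) * (b j * b ((n:ℤ)+2-j))
def betaF (n : ℕ) (c d : ℤ → ℤ) : ℤ → ℤ :=
  fun j => c j * c ((n:ℤ)+1-j) * (d j * d ((n:ℤ)+1-j))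

lemma pt2' {s t : ℤ} (hs : s = 1 ∨ s = -1) (ht : t = 1 ∨ t = -1) :
    ((s : ℤ) : ZMod 4) + ((t : ℤ) : ZMod 4) = 1 + ((s * t : ℤ) : ZMod 4) := by
  rw [← Int.cast_add, pt2 hs ht]

lemma pt4 {u1 u2 u3 u4 v1 v2 v3 v4 : ℤ}
    (h1 : u1 = 1 ∨ u1 = -1) (h2 : u2 = 1 ∨ u2 = -1) (h3 : u3 = 1 ∨ u3 = -1)
    (h4 : u4 = 1 ∨ u4 = -1) (h5 : v1 = 1 ∨ v1 = -1) (h6 : v2 = 1 ∨ v2 = -1)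
    (h7 : v3 = 1 ∨ v3 = -1) (h8 : v4 = 1 ∨ v4 = -1) :
    ((u1*u2 + u3*u4 + (v1*v2 + v3*v4) : ℤ) : ZMod 4)
      = ((3 + u1*u2*(u3*u4)*(v1*v2*(v3*v4)) : ℤ) : ZMod 4) := by
  have P1 := pt2 (sgnMul h1 h2) (sgnMul h3 h4)
  have P2 := pt2 (sgnMul h5 h6) (sgnMul h7 h8)
  have P3 := pt2 (sgnMul (sgnMul h1 h2) (sgnMul h3 h4)) (sgnMul (sgnMul h5 h6) (sgnMul h7 h8))
  rw [show (u1*u2 + u3*u4 + (v1*v2 + v3*v4) : ℤ) = (u1*u2 + u3*u4) + (v1*v2 + v3*v4) from by ring]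
  rw [Int.cast_add, P1, P2]
  rw [show ((1:ZMod 4) + ((u1*u2*(u3*u4) : ℤ):ZMod 4)) + (1 + ((v1*v2*(v3*v4) : ℤ):ZMod 4))
      = 2 + (((u1*u2*(u3*u4) + v1*v2*(v3*v4) : ℤ)):ZMod 4) from by push_cast; ring]
  rw [P3]
  rw [show (u1*u2*(u3*u4)) * (v1*v2*(v3*v4)) = u1*u2*(u3*u4)*(v1*v2*(v3*v4)) from by ring]
  push_cast
  ring

lemma betaSign (n : ℕ) (c d : ℤ → ℤ)
    (hc1 : ∀ j : ℤ, 1 ≤ j → j ≤ (n:ℤ) → c j = 1 ∨ c j = -1)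
    (hd1 : ∀ j : ℤ, 1 ≤ j → j ≤ (n:ℤ) → d j = 1 ∨ d j = -1)
    (j : ℤ) (h1 : 1 ≤ j) (h2 : j ≤ (n:ℤ)) : betaF n c d j = 1 ∨ betaF n c d j = -1 := by
  simp only [betaF]
  exact sgnMul (sgnMul (hc1 j h1 h2) (hc1 _ (by omega) (by omega)))
    (sgnMul (hd1 j h1 h2) (hd1 _ (by omega) (by omega)))

lemma alphaSign (n : ℕ) (a b : ℤ → ℤ)
    (ha1 : ∀ j : ℤ, 1 ≤ j → j ≤ (n:ℤ)+1 → a j = 1 ∨ a j = -1)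
    (hb1 : ∀ j : ℤ, 1 ≤ j → j ≤ (n:ℤ)+1 → b j = 1 ∨ b j = -1)
    (j : ℤ) (h1 : 1 ≤ j) (h2 : j ≤ (n:ℤ)+1) : alphaF n a b j = 1 ∨ alphaF n a b j = -1 := by
  simp only [alphaF]
  exact sgnMul (sgnMul (ha1 j h1 h2) (ha1 _ (by omega) (by omega)))
    (sgnMul (hb1 j h1 h2) (hb1 _ (by omega) (by omega)))

lemma eq1 (n : ℕ) (a b c d : ℤ → ℤ) (h : isBS n a b c d) (k : ℤ) (hk : 1 ≤ k)
    (hkn : 2*k ≤ (n:ℤ)) :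
    (∏ j ∈ Ioc (0:ℤ) (2*k-1), betaF n c d j) * (∏ j ∈ Ioc (0:ℤ) (2*k), alphaF n a b j) = -1 := by
  obtain ⟨⟨ha1, ha0⟩, ⟨hb1, hb0⟩, ⟨hc1, hc0⟩, ⟨hd1, hd0⟩, hz⟩ := h
  have ha1' : ∀ j : ℤ, 1 ≤ j → j ≤ (n:ℤ)+1 → a j = 1 ∨ a j = -1 := by
    intro j u v; exact ha1 j u (by push_cast; omega)
  have hb1' : ∀ j : ℤ, 1 ≤ j → j ≤ (n:ℤ)+1 → b j = 1 ∨ b j = -1 := by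
    intro j u v; exact hb1 j u (by push_cast; omega)
  have hBS := hz ((n:ℤ)+1-2*k) (by omega)
  rw [acPairs (n+1) a (by intro j hj; apply ha0; push_cast at *; omega)
      ((n:ℤ)+1-2*k) k (by omega) (by push_cast; ring) (by omega)] at hBS
  rw [acPairs (n+1) b (by intro j hj; apply hb0; push_cast at *; omega)
      ((n:ℤ)+1-2*k) k (by omega) (by push_cast; ring) (by omega)] at hBS
  rw [acPairsOdd n c (by intro j hj; apply hc0; omega)
      ((n:ℤ)+1-2*k) k hk (by ring) (by omega)] at hBS
  rw [acPairsOdd n d (by intro j hj; apply hd0; omega)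
      ((n:ℤ)+1-2*k) k hk (by ring) (by omega)] at hBS
  rw [show (n:ℤ)+1-2*k+k = (n:ℤ)+1-k from by ring] at hBS
  have key : (c k * c ((n:ℤ)+1-k) + d k * d ((n:ℤ)+1-k))
      + (∑ j ∈ Ioc (0:ℤ) (k-1),
          ((c j * c ((n:ℤ)+1-2*k+j) + c (2*k-j) * c ((n:ℤ)+1-2*k+(2*k-j)))
           + (d j * d ((n:ℤ)+1-2*k+j) + d (2*k-j) * d ((n:ℤ)+1-2*k+(2*k-j)))))
      + (∑ j ∈ Ioc (0:ℤ) k,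
          ((a j * a ((n:ℤ)+1-2*k+j) + a (2*k+1-j) * a ((n:ℤ)+1-2*k+(2*k+1-j)))
           + (b j * b ((n:ℤ)+1-2*k+j) + b (2*k+1-j) * b ((n:ℤ)+1-2*k+(2*k+1-j))))) = 0 := by
    simp only [Finset.sum_add_distrib] at hBS ⊢
    linarith
  have H4 := congrArg (fun z : ℤ => (z : ZMod 4)) key
  simp only [Int.cast_add, Int.cast_zero] at H4
  rw [pt2' (sgnMul (hc1 k (by omega) (by omega)) (hc1 ((n:ℤ)+1-k) (by omega) (by omega)))
        (sgnMul (hd1 k (by omega) (by omega)) (hd1 ((n:ℤ)+1-k) (by omega) (by omega)))] at H4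
  have hS1 : ((∑ j ∈ Ioc (0:ℤ) (k-1),
          ((c j * c ((n:ℤ)+1-2*k+j) + c (2*k-j) * c ((n:ℤ)+1-2*k+(2*k-j)))
           + (d j * d ((n:ℤ)+1-2*k+j) + d (2*k-j) * d ((n:ℤ)+1-2*k+(2*k-j)))) : ℤ) : ZMod 4)
      = ((∑ j ∈ Ioc (0:ℤ) (k-1), (3 + betaF n c d j * betaF n c d (2*k-j)) : ℤ) : ZMod 4) := by
    rw [Int.cast_sum, Int.cast_sum]
    refine Finset.sum_congr rfl (fun j hj => ?_)
    simp only [mem_Ioc] at hj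
    rw [show (n:ℤ)+1-2*k+j = (n:ℤ)+1-(2*k-j) from by ring,
        show (n:ℤ)+1-2*k+(2*k-j) = (n:ℤ)+1-j from by ring]
    rw [pt4 (hc1 j (by omega) (by omega)) (hc1 ((n:ℤ)+1-(2*k-j)) (by omega) (by omega))
          (hc1 (2*k-j) (by omega) (by omega)) (hc1 ((n:ℤ)+1-j) (by omega) (by omega))
          (hd1 j (by omega) (by omega)) (hd1 ((n:ℤ)+1-(2*k-j)) (by omega) (by omega))
          (hd1 (2*k-j) (by omega) (by omega)) (hd1 ((n:ℤ)+1-j) (by omega) (by omega))]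
    rw [show (3 + c j * c ((n:ℤ)+1-(2*k-j)) * (c (2*k-j) * c ((n:ℤ)+1-j))
           * (d j * d ((n:ℤ)+1-(2*k-j)) * (d (2*k-j) * d ((n:ℤ)+1-j))) : ℤ)
         = (3 + betaF n c d j * betaF n c d (2*k-j) : ℤ) from by simp only [betaF]; ring]
  have hS2 : ((∑ j ∈ Ioc (0:ℤ) k,
          ((a j * a ((n:ℤ)+1-2*k+j) + a (2*k+1-j) * a ((n:ℤ)+1-2*k+(2*k+1-j)))
           + (b j * b ((n:ℤ)+1-2*k+j) + b (2*k+1-j) * b ((n:ℤ)+1-2*k+(2*k+1-j)))) : ℤ) : ZMod 4)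
      = ((∑ j ∈ Ioc (0:ℤ) k, (3 + alphaF n a b j * alphaF n a b (2*k+1-j)) : ℤ) : ZMod 4) := by
    rw [Int.cast_sum, Int.cast_sum]
    refine Finset.sum_congr rfl (fun j hj => ?_)
    simp only [mem_Ioc] at hj
    rw [show (n:ℤ)+1-2*k+j = (n:ℤ)+2-(2*k+1-j) from by ring,
        show (n:ℤ)+1-2*k+(2*k+1-j) = (n:ℤ)+2-j from by ring]
    rw [pt4 (ha1' j (by omega) (by omega)) (ha1' ((n:ℤ)+2-(2*k+1-j)) (by omega) (by omega))
          (ha1' (2*k+1-j) (by omega) (by omega)) (ha1' ((n:ℤ)+2-j) (by omega) (by omega))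
          (hb1' j (by omega) (by omega)) (hb1' ((n:ℤ)+2-(2*k+1-j)) (by omega) (by omega))
          (hb1' (2*k+1-j) (by omega) (by omega)) (hb1' ((n:ℤ)+2-j) (by omega) (by omega))]
    rw [show (3 + a j * a ((n:ℤ)+2-(2*k+1-j)) * (a (2*k+1-j) * a ((n:ℤ)+2-j))
           * (b j * b ((n:ℤ)+2-(2*k+1-j)) * (b (2*k+1-j) * b ((n:ℤ)+2-j))) : ℤ)
         = (3 + alphaF n a b j * alphaF n a b (2*k+1-j) : ℤ) from by simp only [alphaF]; ring]
  rw [hS1, hS2] at H4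
  have Hm := master (betaF n c d k) (Ioc (0:ℤ) (k-1)) (Ioc (0:ℤ) k)
    (fun j => betaF n c d j * betaF n c d (2*k-j))
    (fun j => alphaF n a b j * alphaF n a b (2*k+1-j))
    (betaSign n c d hc1 hd1 k (by omega) (by omega))
    (fun j hj => by
      simp only [mem_Ioc] at hj
      exact sgnMul (betaSign n c d hc1 hd1 j (by omega) (by omega))
        (betaSign n c d hc1 hd1 (2*k-j) (by omega) (by omega)))
    (fun j hj => by
      simp only [mem_Ioc] at hj
      exact sgnMul (alphaSign n a b ha1' hb1' j (by omega) (by omega))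
        (alphaSign n a b ha1' hb1' (2*k+1-j) (by omega) (by omega)))
    H4
  rw [← mul_assoc, prodPairMid (betaF n c d) k hk, prodPair (alphaF n a b) k (by omega)] at Hm
  exact Hm

lemma eq2 (n : ℕ) (a b c d : ℤ → ℤ) (h : isBS n a b c d) (k : ℤ) (hk : 1 ≤ k)
    (hkn : 2*k ≤ (n:ℤ)+1) :
    (∏ j ∈ Ioc (0:ℤ) (2*k-1), alphaF n a b j) * (∏ j ∈ Ioc (0:ℤ) (2*k-2), betaF n c d j) = -1 := by
  obtain ⟨⟨ha1, ha0⟩, ⟨hb1, hb0⟩, ⟨hc1, hc0⟩, ⟨hd1, hd0⟩, hz⟩ := h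
  have ha1' : ∀ j : ℤ, 1 ≤ j → j ≤ (n:ℤ)+1 → a j = 1 ∨ a j = -1 := by
    intro j u v; exact ha1 j u (by push_cast; omega)
  have hb1' : ∀ j : ℤ, 1 ≤ j → j ≤ (n:ℤ)+1 → b j = 1 ∨ b j = -1 := by
    intro j u v; exact hb1 j u (by push_cast; omega)
  have hBS := hz ((n:ℤ)+2-2*k) (by omega)
  rw [acPairsOdd (n+1) a (by intro j hj; apply ha0; push_cast at *; omega)
      ((n:ℤ)+2-2*k) k hk (by push_cast; ring) (by omega)] at hBS
  rw [acPairsOdd (n+1) b (by intro j hj; apply hb0; push_cast at *; omega)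
      ((n:ℤ)+2-2*k) k hk (by push_cast; ring) (by omega)] at hBS
  rw [acPairs n c (by intro j hj; apply hc0; omega)
      ((n:ℤ)+2-2*k) (k-1) (by omega) (by ring) (by omega)] at hBS
  rw [acPairs n d (by intro j hj; apply hd0; omega)
      ((n:ℤ)+2-2*k) (k-1) (by omega) (by ring) (by omega)] at hBS
  rw [show (n:ℤ)+2-2*k+k = (n:ℤ)+2-k from by ring] at hBS
  have key : (a k * a ((n:ℤ)+2-k) + b k * b ((n:ℤ)+2-k))
      + (∑ j ∈ Ioc (0:ℤ) (k-1),
          ((a j * a ((n:ℤ)+2-2*k+j) + a (2*k-j) * a ((n:ℤ)+2-2*k+(2*k-j)))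
           + (b j * b ((n:ℤ)+2-2*k+j) + b (2*k-j) * b ((n:ℤ)+2-2*k+(2*k-j)))))
      + (∑ j ∈ Ioc (0:ℤ) (k-1),
          ((c j * c ((n:ℤ)+2-2*k+j) + c (2*(k-1)+1-j) * c ((n:ℤ)+2-2*k+(2*(k-1)+1-j)))
           + (d j * d ((n:ℤ)+2-2*k+j) + d (2*(k-1)+1-j) * d ((n:ℤ)+2-2*k+(2*(k-1)+1-j))))) = 0 := by
    simp only [Finset.sum_add_distrib] at hBS ⊢
    linarith
  have H4 := congrArg (fun z : ℤ => (z : ZMod 4)) key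
  simp only [Int.cast_add, Int.cast_zero] at H4
  rw [pt2' (sgnMul (ha1' k (by omega) (by omega)) (ha1' ((n:ℤ)+2-k) (by omega) (by omega)))
        (sgnMul (hb1' k (by omega) (by omega)) (hb1' ((n:ℤ)+2-k) (by omega) (by omega)))] at H4
  have hS1 : ((∑ j ∈ Ioc (0:ℤ) (k-1),
          ((a j * a ((n:ℤ)+2-2*k+j) + a (2*k-j) * a ((n:ℤ)+2-2*k+(2*k-j)))
           + (b j * b ((n:ℤ)+2-2*k+j) + b (2*k-j) * b ((n:ℤ)+2-2*k+(2*k-j)))) : ℤ) : ZMod 4)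
      = ((∑ j ∈ Ioc (0:ℤ) (k-1), (3 + alphaF n a b j * alphaF n a b (2*k-j)) : ℤ) : ZMod 4) := by
    rw [Int.cast_sum, Int.cast_sum]
    refine Finset.sum_congr rfl (fun j hj => ?_)
    simp only [mem_Ioc] at hj
    rw [show (n:ℤ)+2-2*k+j = (n:ℤ)+2-(2*k-j) from by ring,
        show (n:ℤ)+2-2*k+(2*k-j) = (n:ℤ)+2-j from by ring]
    rw [pt4 (ha1' j (by omega) (by omega)) (ha1' ((n:ℤ)+2-(2*k-j)) (by omega) (by omega))
          (ha1' (2*k-j) (by omega) (by omega)) (ha1' ((n:ℤ)+2-j) (by omega) (by omega))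
          (hb1' j (by omega) (by omega)) (hb1' ((n:ℤ)+2-(2*k-j)) (by omega) (by omega))
          (hb1' (2*k-j) (by omega) (by omega)) (hb1' ((n:ℤ)+2-j) (by omega) (by omega))]
    rw [show (3 + a j * a ((n:ℤ)+2-(2*k-j)) * (a (2*k-j) * a ((n:ℤ)+2-j))
           * (b j * b ((n:ℤ)+2-(2*k-j)) * (b (2*k-j) * b ((n:ℤ)+2-j))) : ℤ)
         = (3 + alphaF n a b j * alphaF n a b (2*k-j) : ℤ) from by simp only [alphaF]; ring]
  have hS2 : ((∑ j ∈ Ioc (0:ℤ) (k-1),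
          ((c j * c ((n:ℤ)+2-2*k+j) + c (2*(k-1)+1-j) * c ((n:ℤ)+2-2*k+(2*(k-1)+1-j)))
           + (d j * d ((n:ℤ)+2-2*k+j) + d (2*(k-1)+1-j) * d ((n:ℤ)+2-2*k+(2*(k-1)+1-j)))) : ℤ) : ZMod 4)
      = ((∑ j ∈ Ioc (0:ℤ) (k-1), (3 + betaF n c d j * betaF n c d (2*(k-1)+1-j)) : ℤ) : ZMod 4) := by
    rw [Int.cast_sum, Int.cast_sum]
    refine Finset.sum_congr rfl (fun j hj => ?_)
    simp only [mem_Ioc] at hj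
    rw [show (n:ℤ)+2-2*k+j = (n:ℤ)+1-(2*(k-1)+1-j) from by ring,
        show (n:ℤ)+2-2*k+(2*(k-1)+1-j) = (n:ℤ)+1-j from by ring]
    rw [pt4 (hc1 j (by omega) (by omega)) (hc1 ((n:ℤ)+1-(2*(k-1)+1-j)) (by omega) (by omega))
          (hc1 (2*(k-1)+1-j) (by omega) (by omega)) (hc1 ((n:ℤ)+1-j) (by omega) (by omega))
          (hd1 j (by omega) (by omega)) (hd1 ((n:ℤ)+1-(2*(k-1)+1-j)) (by omega) (by omega))
          (hd1 (2*(k-1)+1-j) (by omega) (by omega)) (hd1 ((n:ℤ)+1-j) (by omega) (by omega))]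
    rw [show (3 + c j * c ((n:ℤ)+1-(2*(k-1)+1-j)) * (c (2*(k-1)+1-j) * c ((n:ℤ)+1-j))
           * (d j * d ((n:ℤ)+1-(2*(k-1)+1-j)) * (d (2*(k-1)+1-j) * d ((n:ℤ)+1-j))) : ℤ)
         = (3 + betaF n c d j * betaF n c d (2*(k-1)+1-j) : ℤ) from by simp only [betaF]; ring]
  rw [hS1, hS2] at H4
  have Hm := master (alphaF n a b k) (Ioc (0:ℤ) (k-1)) (Ioc (0:ℤ) (k-1))
    (fun j => alphaF n a b j * alphaF n a b (2*k-j))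
    (fun j => betaF n c d j * betaF n c d (2*(k-1)+1-j))
    (alphaSign n a b ha1' hb1' k (by omega) (by omega))
    (fun j hj => by
      simp only [mem_Ioc] at hj
      exact sgnMul (alphaSign n a b ha1' hb1' j (by omega) (by omega))
        (alphaSign n a b ha1' hb1' (2*k-j) (by omega) (by omega)))
    (fun j hj => by
      simp only [mem_Ioc] at hj
      exact sgnMul (betaSign n c d hc1 hd1 j (by omega) (by omega))
        (betaSign n c d hc1 hd1 (2*(k-1)+1-j) (by omega) (by omega)))
    H4
  rw [← mul_assoc, prodPairMid (alphaF n a b) k hk,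
      prodPair (betaF n c d) (k-1) (by omega)] at Hm
  rw [show 2*(k-1) = 2*k-2 from by ring] at Hm
  exact Hm

lemma IocSingleton' (x y : ℤ) (h : x = y - 1) : Finset.Ioc x y = {y} := by
  subst h; exact IocSingleton y

lemma sq1 {x : ℤ} (hx : x = 1 ∨ x = -1) : x * x = 1 := by
  rcases hx with h|h <;> rw [h] <;> norm_num

lemma Qlem (n : ℕ) (a b c d : ℤ → ℤ) (h : isBS n a b c d) (t : ℤ) (h0 : 0 ≤ t)
    (htn : t ≤ (n:ℤ)-1) :
    (∏ j ∈ Ioc (0:ℤ) t, betaF n c d j) * (∏ j ∈ Ioc (0:ℤ) (t+1), alphaF n a b j) = -1 := by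
  rcases Int.even_or_odd t with ⟨k, hk⟩ | ⟨k, hk⟩
  · have E := eq2 n a b c d h (k+1) (by omega) (by omega)
    rw [show 2*(k+1)-1 = t+1 from by omega, show 2*(k+1)-2 = t from by omega] at E
    rw [mul_comm]; exact E
  · have E := eq1 n a b c d h (k+1) (by omega) (by omega)
    rw [show 2*(k+1)-1 = t from by omega, show 2*(k+1) = t+1 from by omega] at E
    exact E

lemma chainStep (n : ℕ) (a b c d : ℤ → ℤ) (h : isBS n a b c d) (t : ℤ) (h1 : 1 ≤ t)
    (htn : t ≤ (n:ℤ)-1) : betaF n c d t = alphaF n a b (t+1) := by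
  have Q1 := Qlem n a b c d h t (by omega) (by omega)
  have Q0 := Qlem n a b c d h (t-1) (by omega) (by omega)
  rw [show t-1+1 = t from by ring] at Q0
  have hsplitB : (∏ j ∈ Ioc (0:ℤ) t, betaF n c d j)
      = (∏ j ∈ Ioc (0:ℤ) (t-1), betaF n c d j) * betaF n c d t := by
    rw [prodSplit 0 (t-1) t (by omega) (by omega), IocSingleton, Finset.prod_singleton]
  have hsplitA : (∏ j ∈ Ioc (0:ℤ) (t+1), alphaF n a b j)
      = (∏ j ∈ Ioc (0:ℤ) t, alphaF n a b j) * alphaF n a b (t+1) := by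
    rw [prodSplit 0 t (t+1) (by omega) (by omega), IocSingleton' t (t+1) (by ring),
        Finset.prod_singleton]
  rw [hsplitB, hsplitA] at Q1
  have P1' : betaF n c d t * alphaF n a b (t+1)
      * ((∏ j ∈ Ioc (0:ℤ) (t-1), betaF n c d j) * (∏ j ∈ Ioc (0:ℤ) t, alphaF n a b j)) = -1 := by
    linear_combination Q1
  rw [Q0] at P1'
  obtain ⟨⟨ha1, _⟩, ⟨hb1, _⟩, ⟨hc1, _⟩, ⟨hd1, _⟩, _⟩ := h
  have ha1' : ∀ j : ℤ, 1 ≤ j → j ≤ (n:ℤ)+1 → a j = 1 ∨ a j = -1 := by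
    intro j u v; exact ha1 j u (by push_cast; omega)
  have hb1' : ∀ j : ℤ, 1 ≤ j → j ≤ (n:ℤ)+1 → b j = 1 ∨ b j = -1 := by
    intro j u v; exact hb1 j u (by push_cast; omega)
  have hβ := betaSign n c d hc1 hd1 t (by omega) (by omega)
  have hα := alphaSign n a b ha1' hb1' (t+1) (by omega) (by omega)
  rcases hβ with h'|h' <;> rcases hα with h''|h'' <;> rw [h', h''] at P1' ⊢ <;>
    first | rfl | (exfalso; norm_num at P1')

lemma betaSym (n : ℕ) (c d : ℤ → ℤ) (j : ℤ) :
    betaF n c d ((n:ℤ)+1-j) = betaF n c d j := by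
  simp only [betaF]
  rw [show (n:ℤ)+1-((n:ℤ)+1-j) = j from by ring]
  ring

lemma alphaSym (n : ℕ) (a b : ℤ → ℤ) (j : ℤ) :
    alphaF n a b ((n:ℤ)+2-j) = alphaF n a b j := by
  simp only [alphaF]
  rw [show (n:ℤ)+2-((n:ℤ)+2-j) = j from by ring]
  ring

lemma alphaConst (n : ℕ) (a b c d : ℤ → ℤ) (h : isBS n a b c d) : ∀ t : ℤ, 2 ≤ t →
    t ≤ (n:ℤ) → alphaF n a b t = alphaF n a b 2 := by
  intro t h2
  refine Int.le_induction (motive := fun t _ => t ≤ (n:ℤ) → alphaF n a b t = alphaF n a b 2) ?_ ?_ t h2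
  · intro _; rfl
  · intro s hs ih htn
    have c1 := chainStep n a b c d h s (by omega) (by omega)
    have c2 := chainStep n a b c d h ((n:ℤ)+1-s) (by omega) (by omega)
    rw [show (n:ℤ)+1-s+1 = (n:ℤ)+2-s from by ring] at c2
    have hstep : alphaF n a b (s+1) = alphaF n a b s :=
      c1.symm.trans (((betaSym n c d s).symm.trans c2).trans (alphaSym n a b s))
    rw [hstep]
    first
    | exact ih (by omega)
    | exact ih (by omega) (by omega)

lemma betaOne (n : ℕ) (a b c d : ℤ → ℤ) (h : isBS n a b c d) :
    ∀ j : ℤ, 1 ≤ j → j ≤ (n:ℤ) → betaF n c d j = 1 := by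
  obtain ⟨⟨ha1, _⟩, ⟨hb1, _⟩, ⟨hc1, _⟩, ⟨hd1, _⟩, _⟩ := id h
  have ha1' : ∀ j : ℤ, 1 ≤ j → j ≤ (n:ℤ)+1 → a j = 1 ∨ a j = -1 := by
    intro j u v; exact ha1 j u (by push_cast; omega)
  have hb1' : ∀ j : ℤ, 1 ≤ j → j ≤ (n:ℤ)+1 → b j = 1 ∨ b j = -1 := by
    intro j u v; exact hb1 j u (by push_cast; omega)
  intro j hj1 hj2
  by_cases hn : (n:ℤ) ≤ 1
  · -- n = 1, j = 1
    have hj : j = 1 := by omega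
    have hn1 : (n:ℤ) = 1 := by omega
    subst hj
    simp only [betaF]
    rw [show (n:ℤ)+1-1 = 1 from by omega]
    rw [sq1 (hc1 1 (by omega) (by omega)), sq1 (hd1 1 (by omega) (by omega))]
    norm_num
  · -- n ≥ 2 : find t₂ ∈ [2,n] with alphaF t₂ = 1
    have halpha : ∃ t₂ : ℤ, 2 ≤ t₂ ∧ t₂ ≤ (n:ℤ) ∧ alphaF n a b t₂ = 1 := by
      rcases Int.even_or_odd (n:ℤ) with ⟨m, hm⟩ | ⟨m, hm⟩
      · refine ⟨m+1, by omega, by omega, ?_⟩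
        simp only [alphaF]
        rw [show (n:ℤ)+2-(m+1) = m+1 from by omega]
        rw [sq1 (ha1' (m+1) (by omega) (by omega)), sq1 (hb1' (m+1) (by omega) (by omega))]
        norm_num
      · have hmid : betaF n c d (m+1) = 1 := by
          simp only [betaF]
          rw [show (n:ℤ)+1-(m+1) = m+1 from by omega]
          rw [sq1 (hc1 (m+1) (by omega) (by omega)), sq1 (hd1 (m+1) (by omega) (by omega))]
          norm_num
        refine ⟨m+2, by omega, by omega, ?_⟩
        rw [show (m:ℤ)+2 = m+1+1 from by ring,
            ← chainStep n a b c d h (m+1) (by omega) (by omega)]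
        exact hmid
    obtain ⟨t₂, ht1, ht2, ht3⟩ := halpha
    have hall : ∀ t : ℤ, 2 ≤ t → t ≤ (n:ℤ) → alphaF n a b t = 1 := by
      intro t u v
      rw [alphaConst n a b c d h t u v, ← alphaConst n a b c d h t₂ ht1 ht2, ht3]
    by_cases hjn : j ≤ (n:ℤ)-1
    · rw [chainStep n a b c d h j hj1 hjn]
      exact hall (j+1) (by omega) (by omega)
    · have hj : j = (n:ℤ) := by omega
      subst hj
      rw [show (n:ℤ) = (n:ℤ)+1-1 from by ring, betaSym n c d 1]
      rw [chainStep n a b c d h 1 (by omega) (by omega)]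
      exact hall 2 (by omega) (by omega)

lemma L1iff (n : ℕ) (a b c d : ℤ → ℤ) (h : isBS n a b c d) :
    ∀ j : ℤ, 1 ≤ j → j ≤ (n:ℤ) →
      (d j = -c j ↔ d ((n:ℤ)+1-j) = -c ((n:ℤ)+1-j)) := by
  intro j h1 h2
  have hβ := betaOne n a b c d h j h1 h2
  obtain ⟨_, _, ⟨hc1, _⟩, ⟨hd1, _⟩, _⟩ := h
  simp only [betaF] at hβ
  rcases hc1 j h1 h2 with h3|h3 <;> rcases hc1 ((n:ℤ)+1-j) (by omega) (by omega) with h4|h4 <;>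
    rcases hd1 j h1 h2 with h5|h5 <;> rcases hd1 ((n:ℤ)+1-j) (by omega) (by omega) with h6|h6 <;>
    rw [h3, h4, h5, h6] at hβ ⊢ <;> first | done | (norm_num at hβ; done) | norm_num

def Pcond (n : ℕ) (c d : ℤ → ℤ) (j : ℤ) : Prop :=
  1 ≤ j ∧ j ≤ (n : ℤ) ∧ d j = -c j ∧ d ((n : ℤ) + 1 - j) = -c ((n : ℤ) + 1 - j) ∧
      c ((n : ℤ) + 1 - j) = -c j

open Classical in
lemma tswap_eq (n : ℕ) (c d x : ℤ → ℤ) (j : ℤ) :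
    tswap n c d x j = if Pcond n c d j then -x j else x j := by
  classical
  by_cases hp : Pcond n c d j
  · simp only [tswap]
    rw [if_pos hp, if_pos (show (1 ≤ j ∧ j ≤ (n : ℤ) ∧ d j = -c j ∧
        d ((n : ℤ) + 1 - j) = -c ((n : ℤ) + 1 - j) ∧ c ((n : ℤ) + 1 - j) = -c j) from hp)]
  · simp only [tswap]
    rw [if_neg hp, if_neg (show ¬(1 ≤ j ∧ j ≤ (n : ℤ) ∧ d j = -c j ∧
        d ((n : ℤ) + 1 - j) = -c ((n : ℤ) + 1 - j) ∧ c ((n : ℤ) + 1 - j) = -c j) from hp)]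

open Classical in
noncomputable def Gf (n : ℕ) (c d : ℤ → ℤ) : ℤ → ℤ := fun j =>
  if Pcond n c d j then c j - d j else 0

noncomputable def Hf (n : ℕ) (c d : ℤ → ℤ) : ℤ → ℤ := fun j => (c j - d j) - Gf n c d j

lemma Psym (n : ℕ) (c d : ℤ → ℤ) (j : ℤ) :
    Pcond n c d ((n:ℤ)+1-j) ↔ Pcond n c d j := by
  unfold Pcond
  rw [show (n:ℤ)+1-((n:ℤ)+1-j) = j from by ring]
  constructor
  · rintro ⟨h1,h2,h3,h4,h5⟩; exact ⟨by omega, by omega, h4, h3, by linarith⟩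
  · rintro ⟨h1,h2,h3,h4,h5⟩; exact ⟨by omega, by omega, h4, h3, by linarith⟩

lemma Gf0 (n : ℕ) (c d : ℤ → ℤ) (j : ℤ) (hj : j < 1 ∨ (n:ℤ) < j) : Gf n c d j = 0 := by
  simp only [Gf]; rw [if_neg]; rintro ⟨h1,h2,-⟩; omega

lemma Gsym (n : ℕ) (c d : ℤ → ℤ) (j : ℤ) : Gf n c d ((n:ℤ)+1-j) = -Gf n c d j := by
  by_cases hp : Pcond n c d j
  · have hp' : Pcond n c d ((n:ℤ)+1-j) := (Psym n c d j).mpr hp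
    simp only [Gf]
    rw [if_pos hp', if_pos hp]
    obtain ⟨h1,h2,h3,h4,h5⟩ := hp
    rw [h4, h5, h3]; ring
  · have hp' : ¬ Pcond n c d ((n:ℤ)+1-j) := fun hx => hp ((Psym n c d j).mp hx)
    simp only [Gf]; rw [if_neg hp', if_neg hp]; ring

lemma Hf0 (n : ℕ) (c d : ℤ → ℤ)
    (hc0 : ∀ j : ℤ, j < 1 ∨ (n:ℤ) < j → c j = 0)
    (hd0 : ∀ j : ℤ, j < 1 ∨ (n:ℤ) < j → d j = 0)
    (j : ℤ) (hj : j < 1 ∨ (n:ℤ) < j) : Hf n c d j = 0 := by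
  simp only [Hf]; rw [hc0 j hj, hd0 j hj, Gf0 n c d j hj]; ring

lemma Hsym (n : ℕ) (c d : ℤ → ℤ)
    (hc1 : ∀ j : ℤ, 1 ≤ j → j ≤ (n:ℤ) → c j = 1 ∨ c j = -1)
    (hc0 : ∀ j : ℤ, j < 1 ∨ (n:ℤ) < j → c j = 0)
    (hd1 : ∀ j : ℤ, 1 ≤ j → j ≤ (n:ℤ) → d j = 1 ∨ d j = -1)
    (hd0 : ∀ j : ℤ, j < 1 ∨ (n:ℤ) < j → d j = 0)
    (hL1 : ∀ j : ℤ, 1 ≤ j → j ≤ (n:ℤ) →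
      (d j = -c j ↔ d ((n:ℤ)+1-j) = -c ((n:ℤ)+1-j)))
    (j : ℤ) : Hf n c d ((n:ℤ)+1-j) = Hf n c d j := by
  by_cases hp : Pcond n c d j
  · have hp' : Pcond n c d ((n:ℤ)+1-j) := (Psym n c d j).mpr hp
    simp only [Hf, Gf]
    rw [if_pos hp', if_pos hp]
    try ring
  · have hp' : ¬ Pcond n c d ((n:ℤ)+1-j) := fun hx => hp ((Psym n c d j).mp hx)
    simp only [Hf, Gf]
    rw [if_neg hp', if_neg hp]
    by_cases hj : 1 ≤ j ∧ j ≤ (n:ℤ)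
    · by_cases hdj : d j = -c j
      · have hdj' : d ((n:ℤ)+1-j) = -c ((n:ℤ)+1-j) := (hL1 j hj.1 hj.2).mp hdj
        have h5 : ¬ (c ((n:ℤ)+1-j) = -c j) := fun h5 => hp ⟨hj.1, hj.2, hdj, hdj', h5⟩
        have hcc : c ((n:ℤ)+1-j) = c j := by
          rcases hc1 j hj.1 hj.2 with u|u <;>
            rcases hc1 ((n:ℤ)+1-j) (by omega) (by omega) with v|v <;>
            rw [u, v] at h5 ⊢ <;> first | rfl | (exfalso; exact h5 (by norm_num))
        rw [hdj, hdj', hcc]; try ring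
      · have hdj2 : d j = c j := by
          rcases hc1 j hj.1 hj.2 with u|u <;> rcases hd1 j hj.1 hj.2 with v|v <;>
            rw [u, v] at hdj ⊢ <;> first | rfl | (exfalso; exact hdj (by norm_num))
        have hdjx : ¬ (d ((n:ℤ)+1-j) = -c ((n:ℤ)+1-j)) :=
          fun hx => hdj ((hL1 j hj.1 hj.2).mpr hx)
        have hdj2' : d ((n:ℤ)+1-j) = c ((n:ℤ)+1-j) := by
          rcases hc1 ((n:ℤ)+1-j) (by omega) (by omega) with u|u <;>
            rcases hd1 ((n:ℤ)+1-j) (by omega) (by omega) with v|v <;>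
            rw [u, v] at hdjx ⊢ <;> first | rfl | (exfalso; exact hdjx (by norm_num))
        rw [hdj2, hdj2']; try ring
    · have e1 : c j = 0 := hc0 j (by omega)
      have e2 : d j = 0 := hd0 j (by omega)
      have e3 : c ((n:ℤ)+1-j) = 0 := hc0 _ (by omega)
      have e4 : d ((n:ℤ)+1-j) = 0 := hd0 _ (by omega)
      rw [e1, e2, e3, e4]

lemma cross (n : ℕ) (i : ℤ) (u v : ℤ → ℤ)
    (hu : ∀ j : ℤ, u ((n:ℤ)+1-j) = -u j) (hv : ∀ j : ℤ, v ((n:ℤ)+1-j) = v j)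
    (hu0 : ∀ j : ℤ, j < 1 ∨ (n:ℤ) < j → u j = 0)
    (hv0 : ∀ j : ℤ, j < 1 ∨ (n:ℤ) < j → v j = 0) :
    ∑ j ∈ Finset.Icc (1:ℤ) (n:ℤ), (u j * v (i+j) + v j * u (i+j)) = 0 := by
  have key : ∑ j ∈ Finset.Icc (min 1 (1-i)) (max (n:ℤ) ((n:ℤ)-i)), u j * v (i+j)
      = ∑ j ∈ Finset.Icc (min 1 (1-i)) (max (n:ℤ) ((n:ℤ)-i)), -(v j * u (i+j)) := by
    refine Finset.sum_nbij' (fun j => (n:ℤ)+1-i-j) (fun j => (n:ℤ)+1-i-j) ?_ ?_ ?_ ?_ ?_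
    · intro x hx; simp only [mem_Icc] at *; omega
    · intro x hx; simp only [mem_Icc] at *; omega
    · intro x _; show (n:ℤ)+1-i-((n:ℤ)+1-i-x) = x; ring
    · intro x _; show (n:ℤ)+1-i-((n:ℤ)+1-i-x) = x; ring
    · intro x _
      show u x * v (i+x) = -(v ((n:ℤ)+1-i-x) * u (i + ((n:ℤ)+1-i-x)))
      rw [show i + ((n:ℤ)+1-i-x) = (n:ℤ)+1-x from by ring,
          show (n:ℤ)+1-i-x = (n:ℤ)+1-(i+x) from by ring]
      rw [hv (i+x), hu x]
      ring
  have e1 : ∑ j ∈ Finset.Icc (1:ℤ) (n:ℤ), u j * v (i+j)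
      = ∑ j ∈ Finset.Icc (min 1 (1-i)) (max (n:ℤ) ((n:ℤ)-i)), u j * v (i+j) := by
    apply Finset.sum_subset
    · intro j hj; simp only [mem_Icc] at *; omega
    · intro j hjT hjn; simp only [mem_Icc] at hjT hjn
      rw [hu0 j (by omega), zero_mul]
  have e2 : ∑ j ∈ Finset.Icc (1:ℤ) (n:ℤ), v j * u (i+j)
      = ∑ j ∈ Finset.Icc (min 1 (1-i)) (max (n:ℤ) ((n:ℤ)-i)), v j * u (i+j) := by
    apply Finset.sum_subset
    · intro j hj; simp only [mem_Icc] at *; omega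
    · intro j hjT hjn; simp only [mem_Icc] at hjT hjn
      rw [hv0 j (by omega), zero_mul]
  rw [Finset.sum_add_distrib, e1, e2, key]
  rw [Finset.sum_neg_distrib]
  ring

lemma ptMain (n : ℕ) (c d : ℤ → ℤ) (i j : ℤ) :
    tswap n c d c j * tswap n c d c (i+j) + tswap n c d d j * tswap n c d d (i+j)
      = c j * c (i+j) + d j * d (i+j)
        - (Gf n c d j * Hf n c d (i+j) + Hf n c d j * Gf n c d (i+j)) := by
  rw [tswap_eq, tswap_eq, tswap_eq, tswap_eq]
  simp only [Hf, Gf]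
  by_cases h1 : Pcond n c d j <;> by_cases h2 : Pcond n c d (i+j)
  · simp only [if_pos h1, if_pos h2]; ring
  · simp only [if_pos h1, if_neg h2]
    obtain ⟨-,-,h3,-,-⟩ := h1
    rw [h3]; ring
  · simp only [if_neg h1, if_pos h2]
    obtain ⟨-,-,h3,-,-⟩ := h2
    rw [h3]; ring
  · simp only [if_neg h1, if_neg h2]; ring

lemma acCD (n : ℕ) (a b c d : ℤ → ℤ) (h : isBS n a b c d) (i : ℤ) :
    ac n (tswap n c d c) i + ac n (tswap n c d d) i = ac n c i + ac n d i := by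
  obtain ⟨-, -, ⟨hc1, hc0⟩, ⟨hd1, hd0⟩, -⟩ := id h
  have hL1 := L1iff n a b c d h
  unfold ac
  rw [← Finset.sum_add_distrib, ← Finset.sum_add_distrib]
  rw [Finset.sum_congr rfl (fun j _ => ptMain n c d i j)]
  rw [Finset.sum_sub_distrib]
  rw [cross n i (Gf n c d) (Hf n c d) (Gsym n c d)
      (Hsym n c d hc1 hc0 hd1 hd0 hL1) (Gf0 n c d) (Hf0 n c d hc0 hd0)]
  ring

lemma binTswap (n : ℕ) (c d x : ℤ → ℤ) (hx : binOn n x) : binOn n (tswap n c d x) := by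
  obtain ⟨hx1, hx0⟩ := hx
  constructor
  · intro j h1 h2
    rw [tswap_eq]
    split_ifs with hp
    · rcases hx1 j h1 h2 with hv|hv <;> rw [hv] <;> norm_num
    · exact hx1 j h1 h2
  · intro j hj
    rw [tswap_eq]
    split_ifs with hp
    · rw [hx0 j hj]; ring
    · exact hx0 j hj

theorem stmt11 (n : ℕ) (a b c d : ℤ → ℤ) (h : isBS n a b c d) :
    isBS n a b (tswap n c d c) (tswap n c d d) := by
  obtain ⟨hA, hB, hC, hD, hz⟩ := id h
  refine ⟨hA, hB, binTswap n c d c hC, binTswap n c d d hD, fun i hi => ?_⟩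
  have hac := acCD n a b c d h i
  have h0 := hz i hi
  linarith
end

section
/- The binary sequences U = (+,+,−,−,−,+,−,−,+) and V = (+,+,−,+,+,−,−,−,+) of length 9 have the same nonperiodic autocorrelation function (N_U = N_V), but V is not obtained from U by any combination of negation and reversal: V ≠ U, V ≠ −U, V ≠ U', V ≠ −U'. -/
open Finset

/-- The sequence `U = (+,+,−,−,−,+,−,−,+)`. -/
def U : ℤ → ℤ := fun j =>
  if j = 1 then 1 else if j = 2 then 1 else if j = 3 then -1 else
  if j = 4 then -1 else if j = 5 then -1 else if j = 6 then 1 else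
  if j = 7 then -1 else if j = 8 then -1 else if j = 9 then 1 else 0

/-- The sequence `V = (+,+,−,+,+,−,−,−,+)`. -/
def V : ℤ → ℤ := fun j =>
  if j = 1 then 1 else if j = 2 then 1 else if j = 3 then -1 else
  if j = 4 then 1 else if j = 5 then 1 else if j = 6 then -1 else
  if j = 7 then -1 else if j = 8 then -1 else if j = 9 then 1 else 0

lemma icc9 : Finset.Icc (1 : ℤ) 9 = {1,2,3,4,5,6,7,8,9} := by decide

lemma ac_eq (a : ℤ → ℤ) (i : ℤ) : ac 9 a i =
    a 1 * a (i+1) + a 2 * a (i+2) + a 3 * a (i+3) + a 4 * a (i+4) + a 5 * a (i+5)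
    + a 6 * a (i+6) + a 7 * a (i+7) + a 8 * a (i+8) + a 9 * a (i+9) := by
  show ∑ j ∈ Finset.Icc (1:ℤ) ((9:ℕ):ℤ), a j * a (i+j) = _
  norm_num [icc9, Finset.sum_insert, Finset.mem_insert]
  ring

lemma U_zero {j : ℤ} (h : j < 1 ∨ 9 < j) : U j = 0 := by
  unfold U; rcases h with h | h <;> (repeat rw [if_neg (by omega)])

lemma V_zero {j : ℤ} (h : j < 1 ∨ 9 < j) : V j = 0 := by
  unfold V; rcases h with h | h <;> (repeat rw [if_neg (by omega)])

lemma ac_vanish (a : ℤ → ℤ) (ha : ∀ j : ℤ, j < 1 ∨ 9 < j → a j = 0) (i : ℤ)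
    (h : i ≤ -9 ∨ 9 ≤ i) : ac 9 a i = 0 := by
  rw [ac_eq]
  rw [ha (i+1) (by omega), ha (i+2) (by omega), ha (i+3) (by omega),
    ha (i+4) (by omega), ha (i+5) (by omega), ha (i+6) (by omega),
    ha (i+7) (by omega), ha (i+8) (by omega), ha (i+9) (by omega)]
  ring

theorem stmt13 :
    (∀ i : ℤ, ac 9 U i = ac 9 V i) ∧
    V ≠ U ∧ V ≠ (fun j => -U j) ∧
    V ≠ (fun j => U (10 - j)) ∧ V ≠ (fun j => -U (10 - j)) := by
  refine ⟨?_, ?_, ?_, ?_, ?_⟩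
  · intro i
    rcases le_or_gt i (-9) with h | h
    · rw [ac_vanish U (fun j hj => U_zero hj) i (Or.inl h),
        ac_vanish V (fun j hj => V_zero hj) i (Or.inl h)]
    rcases le_or_gt 9 i with h2 | h2
    · rw [ac_vanish U (fun j hj => U_zero hj) i (Or.inr h2),
        ac_vanish V (fun j hj => V_zero hj) i (Or.inr h2)]
    interval_cases i <;> (rw [ac_eq, ac_eq]; norm_num [U, V])
  · intro h; have := congrFun h 4; simp [U, V] at this
  · intro h; have := congrFun h 1; simp [U, V] at this
  · intro h; have := congrFun h 2; norm_num [U, V] at this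
  · intro h; have := congrFun h 1; norm_num [U, V] at this
end

section
/- Let A, B, C be {±1}-sequences of lengths m, n, k with associated polynomials A(x), B(x), C(x). Then the polynomial P(x) = A(x)·B(x^m)·C(x^{mn}) has degree mnk − 1 and all its coefficients lie in {±1}; moreover replacing any of the three factors by its dual (f ↦ f*, where f*(x) = x^{deg f} f(x^{-1})) yields a polynomial with the same norm P(x)P(x^{-1}). -/
open LaurentPolynomial

private lemma coeff_mul_expand (m : ℕ) (hm : 0 < m) (P Q : Polynomial ℤ)
    (hP : P.natDegree < m) (j : ℕ) :
    (P * Polynomial.expand ℤ m Q).coeff j = P.coeff (j % m) * Q.coeff (j / m) := by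
  rw [Polynomial.coeff_mul]
  rw [Finset.sum_eq_single (j % m, m * (j / m))]
  · rw [Polynomial.coeff_expand hm, if_pos ⟨j / m, rfl⟩, Nat.mul_div_cancel_left _ hm]
  · rintro ⟨a, b⟩ hab hne
    rw [Finset.HasAntidiagonal.mem_antidiagonal] at hab
    rw [Polynomial.coeff_expand hm]
    by_cases h1 : m ∣ b
    · by_cases h2 : a < m
      · exfalso
        apply hne
        obtain ⟨c, rfl⟩ := h1
        have ha : a = j % m := by
          rw [← hab, Nat.add_mul_mod_self_left, Nat.mod_eq_of_lt h2]
        have hc : c = j / m := by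
          rw [← hab, Nat.add_mul_div_left _ _ hm, Nat.div_eq_of_lt h2, Nat.zero_add]
        rw [ha, hc]
      · rw [Polynomial.coeff_eq_zero_of_natDegree_lt (by omega), zero_mul]
    · simp [h1]
  · intro h
    exact absurd (Finset.HasAntidiagonal.mem_antidiagonal.mpr (Nat.mod_add_div j m)) h

private lemma dual_norm (F : LaurentPolynomial ℤ) (a : ℤ) :
    (T a * invert F) * invert (T a * invert F) = F * invert F := by
  calc (T a * invert F) * invert (T a * invert F)
      = (T a * T (-a)) * (invert F * F) := by
        rw [map_mul, invert_T, involutive_invert F]; ring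
    _ = F * invert F := by
        rw [← T_add]
        simp [mul_comm]

theorem stmt17 (m n k : ℕ) (hm : 0 < m) (hn : 0 < n) (hk : 0 < k)
    (pA pB pC : Polynomial ℤ)
    (hAdeg : pA.natDegree = m - 1) (hA : ∀ j < m, pA.coeff j = 1 ∨ pA.coeff j = -1)
    (hBdeg : pB.natDegree = n - 1) (hB : ∀ j < n, pB.coeff j = 1 ∨ pB.coeff j = -1)
    (hCdeg : pC.natDegree = k - 1) (hC : ∀ j < k, pC.coeff j = 1 ∨ pC.coeff j = -1) :
    (pA * Polynomial.expand ℤ m pB * Polynomial.expand ℤ (m * n) pC).natDegree =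
      m * n * k - 1 ∧
    (∀ j < m * n * k,
      (pA * Polynomial.expand ℤ m pB * Polynomial.expand ℤ (m * n) pC).coeff j = 1 ∨
      (pA * Polynomial.expand ℤ m pB * Polynomial.expand ℤ (m * n) pC).coeff j = -1) ∧
    (∀ b₁ b₂ b₃ : Bool,
      let F₁ := Polynomial.toLaurent pA
      let F₂ := Polynomial.toLaurent (Polynomial.expand ℤ m pB)
      let F₃ := Polynomial.toLaurent (Polynomial.expand ℤ (m * n) pC)
      let G₁ := if b₁ then T ((m : ℤ) - 1) * invert F₁ else F₁
      let G₂ := if b₂ then T ((m : ℤ) * ((n : ℤ) - 1)) * invert F₂ else F₂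
      let G₃ := if b₃ then T ((m : ℤ) * (n : ℤ) * ((k : ℤ) - 1)) * invert F₃ else F₃
      (G₁ * G₂ * G₃) * invert (G₁ * G₂ * G₃) =
        (F₁ * F₂ * F₃) * invert (F₁ * F₂ * F₃)) := by
  have hmn : 0 < m * n := Nat.mul_pos hm hn
  have hAlt : pA.natDegree < m := by omega
  have h1 : ∀ j, (pA * Polynomial.expand ℤ m pB).coeff j
      = pA.coeff (j % m) * pB.coeff (j / m) := coeff_mul_expand m hm pA pB hAlt
  have hd1 : (pA * Polynomial.expand ℤ m pB).natDegree < m * n := by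
    refine lt_of_le_of_lt (Polynomial.natDegree_mul_le) ?_
    rw [Polynomial.natDegree_expand, hAdeg, hBdeg]
    cases n with
    | zero => omega
    | succ n' =>
      have e : m * (n' + 1) = n' * m + m := by ring
      simp only [Nat.add_sub_cancel]
      rw [e]
      generalize n' * m = x
      omega
  have h2 : ∀ j, (pA * Polynomial.expand ℤ m pB * Polynomial.expand ℤ (m * n) pC).coeff j
      = pA.coeff (j % (m*n) % m) * pB.coeff (j % (m*n) / m) * pC.coeff (j / (m*n)) := by
    intro j
    rw [coeff_mul_expand (m*n) hmn _ pC hd1 j, h1]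
  have hcoeffs : ∀ j < m * n * k,
      (pA * Polynomial.expand ℤ m pB * Polynomial.expand ℤ (m * n) pC).coeff j = 1 ∨
      (pA * Polynomial.expand ℤ m pB * Polynomial.expand ℤ (m * n) pC).coeff j = -1 := by
    intro j hj
    have hc : j / (m*n) < k := Nat.div_lt_iff_lt_mul hmn |>.mpr
      (by rw [Nat.mul_comm k (m*n)]; exact hj)
    have hb : j % (m*n) / m < n := Nat.div_lt_iff_lt_mul hm |>.mpr
      (by rw [Nat.mul_comm n m]; exact Nat.mod_lt j hmn)
    have ha : j % (m*n) % m < m := Nat.mod_lt _ hm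
    rcases hA _ ha with h | h <;> rcases hB _ hb with h' | h' <;>
      rcases hC _ hc with h'' | h'' <;> rw [h2, h, h', h''] <;> norm_num
  refine ⟨?_, hcoeffs, ?_⟩
  · have key : m * n - 1 + (k - 1) * (m * n) = m * n * k - 1 := by
      cases k with
      | zero => omega
      | succ c =>
        have e : m * n * (c + 1) = c * (m * n) + m * n := by ring
        rw [e]
        simp only [Nat.add_sub_cancel]
        have hy : 0 < m * n := hmn
        generalize m * n = y at hy ⊢
        generalize c * y = x
        omega
    have hle : (pA * Polynomial.expand ℤ m pB * Polynomial.expand ℤ (m * n) pC).natDegree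
        ≤ m * n * k - 1 := by
      refine le_trans Polynomial.natDegree_mul_le ?_
      rw [Polynomial.natDegree_expand, hCdeg, ← key]
      exact Nat.add_le_add (by omega) le_rfl
    have hne : (pA * Polynomial.expand ℤ m pB * Polynomial.expand ℤ (m * n) pC).coeff
        (m * n * k - 1) ≠ 0 := by
      have hlt : m * n * k - 1 < m * n * k := by
        have : 0 < m * n * k := Nat.mul_pos hmn hk
        omega
      rcases hcoeffs _ hlt with h | h <;> rw [h] <;> norm_num
    exact le_antisymm hle (Polynomial.le_natDegree_of_ne_zero hne)
  · intro b₁ b₂ b₃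
    have prod : ∀ u v w : LaurentPolynomial ℤ, (u * v * w) * invert (u * v * w)
        = (u * invert u) * ((v * invert v) * (w * invert w)) := by
      intro u v w; simp only [map_mul]; ring
    have key : ∀ (F : LaurentPolynomial ℤ) (b : Bool) (a : ℤ),
        (if b then T a * invert F else F) * invert (if b then T a * invert F else F)
          = F * invert F := by
      intro F b a
      cases b
      · simp
      · simpa using dual_norm F a
    dsimp only
    rw [prod, prod, key, key, key]
end
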